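/- Let a ∈ ℝ_{>0}^{3+3n}, let ξ > 0, and let g ∈ ℝ_{>0}^3 with g_2 = ξ. Then the first and third components of Θ(g,a) vanish if and only if (g_1, g_3) solves the linear system a_1 ξ^{n−1} g_1 − ω1 g_3 = −ξ^{−1} Ω4(ξ) and a_3 ξ^{n−2} g_1 − ω3 g_3 = −ξ^{−1} Ω6(ξ). If moreover Δ(ξ) ≠ 0 (equivalently ξ ≠ ξ*), this linear system has the unique solution g_1 = ξ^{1−n} F1(ξ)/Δ(ξ) and g_3 = ξ^{−1} F3(ξ)/Δ(ξ). -/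

import Mathlib

open Finset

namespace Phos

noncomputable section

/-- Standard basis vector of `ℝ^N`, with `1`-based index `j`. -/
def e (N : ℕ) (j : ℕ) : Fin N → ℝ := fun m => if (m : ℕ) + 1 = j then 1 else 0

/-- Standard basis vector of `ℕ^N`, with `1`-based index `j`. -/
def eN (N : ℕ) (j : ℕ) : Fin N → ℕ := fun m => if (m : ℕ) + 1 = j then 1 else 0

/-- The stoichiometric matrix `S` of the `n`-site sequential distributive
phosphorylation network.  For each `i = 1,…,n` the six columns `6(i−1)+1,…,6(i−1)+6`
are `e_{1+3i}−e_1−e_{3i−1}`, `e_1+e_{3i−1}−e_{1+3i}`, `e_1+e_{2+3i}−e_{1+3i}`,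
`e_{3+3i}−e_3−e_{2+3i}`, `e_3+e_{2+3i}−e_{3+3i}`, `e_3+e_{3i−1}−e_{3+3i}`. -/
def Smat (n : ℕ) : Matrix (Fin (3*n+3)) (Fin (6*n)) ℝ :=
  Matrix.of fun m r =>
    (![e (3*n+3) (1+3*((r : ℕ)/6+1)) - e (3*n+3) 1 - e (3*n+3) (3*((r : ℕ)/6+1)-1),
       e (3*n+3) 1 + e (3*n+3) (3*((r : ℕ)/6+1)-1) - e (3*n+3) (1+3*((r : ℕ)/6+1)),
       e (3*n+3) 1 + e (3*n+3) (2+3*((r : ℕ)/6+1)) - e (3*n+3) (1+3*((r : ℕ)/6+1)),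
       e (3*n+3) (3+3*((r : ℕ)/6+1)) - e (3*n+3) 3 - e (3*n+3) (2+3*((r : ℕ)/6+1)),
       e (3*n+3) 3 + e (3*n+3) (2+3*((r : ℕ)/6+1)) - e (3*n+3) (3+3*((r : ℕ)/6+1)),
       e (3*n+3) 3 + e (3*n+3) (3*((r : ℕ)/6+1)-1) - e (3*n+3) (3+3*((r : ℕ)/6+1))])
      ⟨(r : ℕ) % 6, Nat.mod_lt _ (by norm_num)⟩ m

/-- The rate exponent matrix `Y`: for each `i = 1,…,n` the six columns
`6(i−1)+1,…,6(i−1)+6` are `e_1+e_{3i−1}`, `e_{1+3i}`, `e_{1+3i}`,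
`e_3+e_{2+3i}`, `e_{3+3i}`, `e_{3+3i}`. -/
def Ymat (n : ℕ) : Matrix (Fin (3*n+3)) (Fin (6*n)) ℕ :=
  Matrix.of fun m r =>
    (![eN (3*n+3) 1 + eN (3*n+3) (3*((r : ℕ)/6+1)-1),
       eN (3*n+3) (1+3*((r : ℕ)/6+1)),
       eN (3*n+3) (1+3*((r : ℕ)/6+1)),
       eN (3*n+3) 3 + eN (3*n+3) (2+3*((r : ℕ)/6+1)),
       eN (3*n+3) (3+3*((r : ℕ)/6+1)),
       eN (3*n+3) (3+3*((r : ℕ)/6+1))])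
      ⟨(r : ℕ) % 6, Nat.mod_lt _ (by norm_num)⟩ m

/-- The monomial map `Φ(x)_j = ∏ₘ xₘ^{Y_{mj}}`. -/
def Phi (n : ℕ) (x : Fin (3*n+3) → ℝ) : Fin (6*n) → ℝ :=
  fun r => ∏ m, x m ^ (Ymat n m r)

/-- The conservation matrix `Z` (rows `z1, z2, z3`). -/
def Zmat (n : ℕ) : Matrix (Fin 3) (Fin (3*n+3)) ℝ :=
  Matrix.of fun r j =>
    if (r : ℕ) = 0 then (if (j : ℕ) % 3 = 0 then 1 else 0)
    else if (r : ℕ) = 1 then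
      (if (j : ℕ) % 3 = 1 then 1 else if (j : ℕ) = 0 ∨ (j : ℕ) = 2 then -1 else 0)
    else (if (j : ℕ) % 3 = 2 then 1 else 0)

/-- The `6 × 3` block `E0`. -/
def E0 : Fin 6 → Fin 3 → ℝ :=
  ![![1,0,1], ![1,0,0], ![0,0,1], ![0,1,1], ![0,1,0], ![0,0,1]]

/-- The block diagonal matrix `E` with `n` copies of `E0`. -/
def Emat (n : ℕ) : Matrix (Fin (6*n)) (Fin (3*n)) ℝ :=
  Matrix.of fun r c =>
    if (r : ℕ) / 6 = (c : ℕ) / 3 then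
      E0 ⟨(r : ℕ) % 6, Nat.mod_lt _ (by norm_num)⟩ ⟨(c : ℕ) % 3, Nat.mod_lt _ (by norm_num)⟩
    else 0

/-- The matrix `L ∈ ℤ^{(3+3n)×3}`: row `1 = (1, n−1, −1)`, row `2 = (−1, −n, 0)`,
row `3 = (1, n−2, −1)`, and for `i = 1,…,n` rows `1+3i` and `3+3i` equal
`(0, i−2, −1)` while row `2+3i = (−1, i−n, 0)`. -/
def Lmat (n : ℕ) : Matrix (Fin (3*n+3)) (Fin 3) ℤ :=
  Matrix.of fun j c =>
    if (j : ℕ) = 0 then ![1, (n : ℤ) - 1, -1] c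
    else if (j : ℕ) = 1 then ![-1, -(n : ℤ), 0] c
    else if (j : ℕ) = 2 then ![1, (n : ℤ) - 2, -1] c
    else if (j : ℕ) % 3 = 1 then ![-1, (((j : ℕ) / 3 : ℕ) : ℤ) - (n : ℤ), 0] c
    else ![0, (((j : ℕ) / 3 : ℕ) : ℤ) - 2, -1] c

/-- `g^L ∈ ℝ_{>0}^{3+3n}`, `(g^L)_j = g₁^{L_{j1}} g₂^{L_{j2}} g₃^{L_{j3}}`. -/
def gL (n : ℕ) (g : Fin 3 → ℝ) : Fin (3*n+3) → ℝ :=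
  fun j => ∏ c, g c ^ (Lmat n j c)

/-- The coset condition map `Θ(g,a) = Z diag(a) (g^L − 𝟙)`. -/
def Theta (n : ℕ) (g : Fin 3 → ℝ) (a : Fin (3*n+3) → ℝ) : Fin 3 → ℝ :=
  (Zmat n).mulVec (fun j => a j * (gL n g j - 1))

/-- The rate constants `κ(a,λ)_j = (Eλ)_j / Φ(a)_j`. -/
def kappaOf (n : ℕ) (a : Fin (3*n+3) → ℝ) (lam : Fin (3*n) → ℝ) : Fin (6*n) → ℝ :=
  fun r => (Emat n).mulVec lam r / Phi n a r

/-- `x` is a (positive) steady state of `ẋ = S diag(κ) Φ(x)`. -/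
def isSteady (n : ℕ) (κ : Fin (6*n) → ℝ) (x : Fin (3*n+3) → ℝ) : Prop :=
  (Smat n).mulVec (fun r => κ r * Phi n x r) = 0

/-- The `1`-based component `a_j` of a vector `a ∈ ℝ^{3+3n}`. -/
def av (n : ℕ) (a : Fin (3*n+3) → ℝ) (j : ℕ) : ℝ :=
  if h : j - 1 < 3*n+3 then a ⟨j - 1, h⟩ else 0

/-- `ω1 = Σ_{k=0}^n a_{1+3k}`. -/
def om1 (n : ℕ) (a : Fin (3*n+3) → ℝ) : ℝ := ∑ k ∈ Finset.range (n+1), av n a (1+3*k)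

/-- `ω2 = −a₁ − a₃ + Σ_{k=0}^n a_{2+3k}`. -/
def om2 (n : ℕ) (a : Fin (3*n+3) → ℝ) : ℝ :=
  -(av n a 1) - av n a 3 + ∑ k ∈ Finset.range (n+1), av n a (2+3*k)

/-- `ω3 = Σ_{k=0}^n a_{3+3k}`. -/
def om3 (n : ℕ) (a : Fin (3*n+3) → ℝ) : ℝ := ∑ k ∈ Finset.range (n+1), av n a (3+3*k)

/-- `Ω2(ξ) = Σ_{k=0}^n a_{2+3k} ξ^k`. -/
def Om2 (n : ℕ) (a : Fin (3*n+3) → ℝ) (ξ : ℝ) : ℝ :=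
  ∑ k ∈ Finset.range (n+1), av n a (2+3*k) * ξ ^ k

/-- `Ω4(ξ) = Σ_{k=1}^n a_{1+3k} ξ^{k−1}`. -/
def Om4 (n : ℕ) (a : Fin (3*n+3) → ℝ) (ξ : ℝ) : ℝ :=
  ∑ k ∈ Finset.Icc 1 n, av n a (1+3*k) * ξ ^ (k-1)

/-- `Ω6(ξ) = Σ_{k=1}^n a_{3+3k} ξ^{k−1}`. -/
def Om6 (n : ℕ) (a : Fin (3*n+3) → ℝ) (ξ : ℝ) : ℝ :=
  ∑ k ∈ Finset.Icc 1 n, av n a (3+3*k) * ξ ^ (k-1)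

/-- `Δ(ξ) = (a₁/ω1)ξ − a₃/ω3`. -/
def Dlt (n : ℕ) (a : Fin (3*n+3) → ℝ) (ξ : ℝ) : ℝ :=
  av n a 1 / om1 n a * ξ - av n a 3 / om3 n a

/-- `ξ* = (ω1 a₃)/(a₁ ω3)`. -/
def xistar (n : ℕ) (a : Fin (3*n+3) → ℝ) : ℝ :=
  om1 n a * av n a 3 / (av n a 1 * om3 n a)

/-- `F1(ξ) = Ω6(ξ)/ω3 − Ω4(ξ)/ω1`. -/
def F1 (n : ℕ) (a : Fin (3*n+3) → ℝ) (ξ : ℝ) : ℝ :=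
  Om6 n a ξ / om3 n a - Om4 n a ξ / om1 n a

/-- `F3(ξ) = (a₁ξ/ω1)(Ω6(ξ)/ω3) − (a₃/ω3)(Ω4(ξ)/ω1)`. -/
def F3 (n : ℕ) (a : Fin (3*n+3) → ℝ) (ξ : ℝ) : ℝ :=
  av n a 1 * ξ / om1 n a * (Om6 n a ξ / om3 n a) - av n a 3 / om3 n a * (Om4 n a ξ / om1 n a)

/-- `A(ξ) = (Ω4(ξ)+Ω6(ξ))Ω2(ξ)`. -/
def Ap (n : ℕ) (a : Fin (3*n+3) → ℝ) (ξ : ℝ) : ℝ := (Om4 n a ξ + Om6 n a ξ) * Om2 n a ξ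

/-- `B(ξ) = (a₁ξ + a₃)Ω2(ξ) − ω2 ξ (Ω4(ξ)+Ω6(ξ))`. -/
def Bp (n : ℕ) (a : Fin (3*n+3) → ℝ) (ξ : ℝ) : ℝ :=
  (av n a 1 * ξ + av n a 3) * Om2 n a ξ - om2 n a * ξ * (Om4 n a ξ + Om6 n a ξ)

/-- `C(ξ) = ξ(a₁ξ + a₃)(ω1+ω2+ω3)`. -/
def Cp (n : ℕ) (a : Fin (3*n+3) → ℝ) (ξ : ℝ) : ℝ :=
  ξ * (av n a 1 * ξ + av n a 3) * (om1 n a + om2 n a + om3 n a)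

/-- `P(ξ) = A(ξ)Δ(ξ)² + B(ξ)Δ(ξ)F1(ξ) − C(ξ)F1(ξ)²`. -/
def Pp (n : ℕ) (a : Fin (3*n+3) → ℝ) (ξ : ℝ) : ℝ :=
  Ap n a ξ * (Dlt n a ξ)^2 + Bp n a ξ * Dlt n a ξ * F1 n a ξ - Cp n a ξ * (F1 n a ξ)^2

/-- `θ(ξ) = 2C(ξ)F1(ξ) − Δ(ξ)[B(ξ) + (B(ξ)² + 4A(ξ)C(ξ))^{1/2}]`. -/
def thetaFun (n : ℕ) (a : Fin (3*n+3) → ℝ) (ξ : ℝ) : ℝ :=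
  2 * Cp n a ξ * F1 n a ξ -
    Dlt n a ξ * (Bp n a ξ + Real.sqrt ((Bp n a ξ)^2 + 4 * Ap n a ξ * Cp n a ξ))

/-- `g1(ξ) = ξ^{1−n} F1(ξ)/Δ(ξ)`. -/
def g1f (n : ℕ) (a : Fin (3*n+3) → ℝ) (ξ : ℝ) : ℝ :=
  ξ ^ ((1 : ℤ) - (n : ℤ)) * F1 n a ξ / Dlt n a ξ

/-- `g3(ξ) = ξ^{−1} F3(ξ)/Δ(ξ)`. -/
def g3f (n : ℕ) (a : Fin (3*n+3) → ℝ) (ξ : ℝ) : ℝ :=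
  ξ⁻¹ * F3 n a ξ / Dlt n a ξ

/-- The candidate second steady state `b = diag(g^L) a` built from a zero `ξ`
of the determining equation, with `g = (g1(ξ), ξ, g3(ξ))`. -/
def bOf (n : ℕ) (a : Fin (3*n+3) → ℝ) (ξ : ℝ) : Fin (3*n+3) → ℝ :=
  fun j => gL n ![g1f n a ξ, ξ, g3f n a ξ] j * a j

end

end Phos
namespace Phos


section Aux
variable {n : ℕ}

lemma sum_range_triple (m : ℕ) (f : ℕ → ℝ) :
    ∑ j ∈ Finset.range (3*m), f j
      = ∑ k ∈ Finset.range m, (f (3*k) + f (3*k+1) + f (3*k+2)) := by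
  induction m with
  | zero => simp
  | succ m ih =>
    rw [Finset.sum_range_succ, ← ih, show 3*(m+1) = 3*m+1+1+1 by ring,
      Finset.sum_range_succ, Finset.sum_range_succ, Finset.sum_range_succ]
    ring_nf

lemma av_pos (a : Fin (3*n+3) → ℝ) (ha : ∀ j, 0 < a j) (j : ℕ)
    (h2 : j - 1 < 3*n+3) : 0 < av n a j := by
  rw [av, dif_pos h2]; exact ha _

lemma gL_zero (g : Fin 3 → ℝ) (h : 0 < 3*n+3) :
    gL n g ⟨0, h⟩ = g 0 * g 1 ^ ((n:ℤ)-1) * (g 2)⁻¹ := by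
  simp [gL, Fin.prod_univ_three, Lmat, Fin.isValue, zpow_one]

lemma gL_two (g : Fin 3 → ℝ) (h : 2 < 3*n+3) :
    gL n g ⟨2, h⟩ = g 0 * g 1 ^ ((n:ℤ)-2) * (g 2)⁻¹ := by
  simp [gL, Fin.prod_univ_three, Lmat, Fin.isValue, zpow_one]

lemma gL_mod0 (g : Fin 3 → ℝ) (k : ℕ) (hk : 1 ≤ k) (h : 3*k < 3*n+3) :
    gL n g ⟨3*k, h⟩ = g 1 ^ ((k:ℤ)-2) * (g 2)⁻¹ := by
  simp only [gL, Fin.prod_univ_three, Lmat, Matrix.of_apply]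
  have h0 : ¬(3*k = 0) := by omega
  have h1 : ¬(3*k = 1) := by omega
  have h2 : ¬(3*k = 2) := by omega
  have h3 : ¬(3*k % 3 = 1) := by omega
  have hdiv : 3*k/3 = k := by omega
  simp [h0, h1, h2, h3, hdiv]

lemma gL_mod2 (g : Fin 3 → ℝ) (k : ℕ) (hk : 1 ≤ k) (h : 3*k+2 < 3*n+3) :
    gL n g ⟨3*k+2, h⟩ = g 1 ^ ((k:ℤ)-2) * (g 2)⁻¹ := by
  simp only [gL, Fin.prod_univ_three, Lmat, Matrix.of_apply]
  have h0 : ¬(3*k+2 = 0) := by omega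
  have h1 : ¬(3*k+2 = 1) := by omega
  have h2 : ¬(3*k+2 = 2) := by omega
  have h3 : ¬((3*k+2) % 3 = 1) := by omega
  have hdiv : (3*k+2)/3 = k := by omega
  simp [h0, h1, h2, h3, hdiv, show k ≠ 0 by omega]

lemma Om4_range (a : Fin (3*n+3) → ℝ) (ξ : ℝ) :
    Om4 n a ξ = ∑ i ∈ Finset.range n, av n a (1+3*(i+1)) * ξ^i := by
  rw [Om4, ← Finset.Ico_add_one_right_eq_Icc, Finset.sum_Ico_eq_sum_range]
  refine Finset.sum_congr (by norm_num) fun i hi => ?_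
  congr 2 <;> omega

lemma Om6_range (a : Fin (3*n+3) → ℝ) (ξ : ℝ) :
    Om6 n a ξ = ∑ i ∈ Finset.range n, av n a (3+3*(i+1)) * ξ^i := by
  rw [Om6, ← Finset.Ico_add_one_right_eq_Icc, Finset.sum_Ico_eq_sum_range]
  refine Finset.sum_congr (by norm_num) fun i hi => ?_
  congr 2 <;> omega

lemma om1_split (a : Fin (3*n+3) → ℝ) :
    om1 n a = av n a 1 + ∑ i ∈ Finset.range n, av n a (1+3*(i+1)) := by
  rw [om1, Finset.sum_range_succ']
  simp [add_comm]

lemma om3_split (a : Fin (3*n+3) → ℝ) :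
    om3 n a = av n a 3 + ∑ i ∈ Finset.range n, av n a (3+3*(i+1)) := by
  rw [om3, Finset.sum_range_succ']
  simp [add_comm]

lemma theta0_key (hn : 2 ≤ n) (a : Fin (3*n+3) → ℝ)
    (ξ : ℝ) (hξ : 0 < ξ) (g : Fin 3 → ℝ) (hg2 : 0 < g 2) (hg1 : g 1 = ξ) :
    Theta n g a 0 * g 2
      = av n a 1 * ξ ^ (n-1) * g 0 - om1 n a * g 2 + ξ⁻¹ * Om4 n a ξ := by
  have hξ0 : ξ ≠ 0 := ne_of_gt hξ
  have hg20 : g 2 ≠ 0 := ne_of_gt hg2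
  set f : ℕ → ℝ := fun j =>
    if h : j < 3*n+3 then Zmat n 0 ⟨j,h⟩ * (a ⟨j,h⟩ * (gL n g ⟨j,h⟩ - 1)) else 0 with hf
  have h1 : Theta n g a 0 = ∑ j ∈ Finset.range (3*n+3), f j := by
    rw [← Fin.sum_univ_eq_sum_range]
    simp only [Theta, Matrix.mulVec, dotProduct]
    refine Finset.sum_congr rfl fun j _ => ?_
    rw [hf]
    simp only [Fin.is_lt, dif_pos, Fin.eta]
  have h2 : ∀ k, f (3*k+1) = 0 := by
    intro k; rw [hf]; dsimp only; split
    · have hm : ¬((3*k+1) % 3 = 0) := by omega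
      simp [Zmat, hm]
    · rfl
  have h3 : ∀ k, f (3*k+2) = 0 := by
    intro k; rw [hf]; dsimp only; split
    · have hm : ¬((3*k+2) % 3 = 0) := by omega
      simp [Zmat, hm]
    · rfl
  have hf0 : f 0 = av n a 1 * (g 0 * ξ^((n:ℤ)-1) * (g 2)⁻¹ - 1) := by
    rw [hf]; dsimp only
    rw [dif_pos (show 0 < 3*n+3 by omega), gL_zero, hg1]
    have hav : av n a 1 = a ⟨0, by omega⟩ := by rw [av, dif_pos (by omega)]
    rw [hav]
    simp [Zmat]
  have hsum : ∑ i ∈ Finset.range n, f (3*(i+1))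
      = ∑ i ∈ Finset.range n,
          ((av n a (1+3*(i+1)) * ξ^i) * (ξ⁻¹ * (g 2)⁻¹) - av n a (1+3*(i+1))) := by
    refine Finset.sum_congr rfl fun i hi => ?_
    rw [Finset.mem_range] at hi
    have hmem : 3*(i+1) < 3*n+3 := by omega
    rw [hf]; dsimp only
    rw [dif_pos hmem, gL_mod0 (hk := by omega), hg1]
    have hz : ξ ^ (((i+1:ℕ):ℤ)-2) = ξ^i * ξ⁻¹ := by
      rw [show ((i+1:ℕ):ℤ)-2 = (i:ℤ) - 1 by push_cast; ring, zpow_sub₀ hξ0,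
        zpow_natCast, zpow_one, div_eq_mul_inv]
    have hZ : Zmat n 0 ⟨3*(i+1), hmem⟩ = 1 := by
      have : (3*(i+1)) % 3 = 0 := by omega
      simp [Zmat, this]
    have hav : av n a (1+3*(i+1)) = a ⟨3*(i+1), hmem⟩ := by
      rw [av, dif_pos (by omega)]
      congr 1; exact Fin.ext (by simp)
    rw [hz, hZ, hav]; ring
  have hpow : ξ^((n:ℤ)-1) = ξ^(n-1) := by
    rw [show (n:ℤ)-1 = ((n-1:ℕ):ℤ) by omega, zpow_natCast]
  rw [h1, show 3*n+3 = 3*(n+1) by ring, sum_range_triple]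
  simp only [h2, h3, add_zero]
  rw [Finset.sum_range_succ', hsum, hf0, om1_split, Om4_range, hpow,
    Finset.sum_sub_distrib, ← Finset.sum_mul]
  field_simp
  ring

end Aux

lemma theta2_key (hn : 2 ≤ n) (a : Fin (3*n+3) → ℝ)
    (ξ : ℝ) (hξ : 0 < ξ) (g : Fin 3 → ℝ) (hg2 : 0 < g 2) (hg1 : g 1 = ξ) :
    Theta n g a 2 * g 2
      = av n a 3 * ξ ^ (n-2) * g 0 - om3 n a * g 2 + ξ⁻¹ * Om6 n a ξ := by
  have hξ0 : ξ ≠ 0 := ne_of_gt hξ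
  have hg20 : g 2 ≠ 0 := ne_of_gt hg2
  set f : ℕ → ℝ := fun j =>
    if h : j < 3*n+3 then Zmat n 2 ⟨j,h⟩ * (a ⟨j,h⟩ * (gL n g ⟨j,h⟩ - 1)) else 0 with hf
  have h1 : Theta n g a 2 = ∑ j ∈ Finset.range (3*n+3), f j := by
    rw [← Fin.sum_univ_eq_sum_range]
    simp only [Theta, Matrix.mulVec, dotProduct]
    refine Finset.sum_congr rfl fun j _ => ?_
    rw [hf]
    simp only [Fin.is_lt, dif_pos, Fin.eta]
  have h2 : ∀ k, f (3*k) = 0 := by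
    intro k; rw [hf]; dsimp only; split
    · have hm : ¬((3*k) % 3 = 2) := by omega
      simp [Zmat, hm]
    · rfl
  have h3 : ∀ k, f (3*k+1) = 0 := by
    intro k; rw [hf]; dsimp only; split
    · have hm : ¬((3*k+1) % 3 = 2) := by omega
      simp [Zmat, hm]
    · rfl
  have hf0 : f 2 = av n a 3 * (g 0 * ξ^((n:ℤ)-2) * (g 2)⁻¹ - 1) := by
    rw [hf]; dsimp only
    rw [dif_pos (show 2 < 3*n+3 by omega), gL_two, hg1]
    have hav : av n a 3 = a ⟨2, by omega⟩ := by rw [av, dif_pos (by omega)]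
    rw [hav]
    simp [Zmat]
  have hsum : ∑ i ∈ Finset.range n, f (3*(i+1)+2)
      = ∑ i ∈ Finset.range n,
          ((av n a (3+3*(i+1)) * ξ^i) * (ξ⁻¹ * (g 2)⁻¹) - av n a (3+3*(i+1))) := by
    refine Finset.sum_congr rfl fun i hi => ?_
    rw [Finset.mem_range] at hi
    have hmem : 3*(i+1)+2 < 3*n+3 := by omega
    rw [hf]; dsimp only
    rw [dif_pos hmem, gL_mod2 (hk := by omega), hg1]
    have hz : ξ ^ (((i+1:ℕ):ℤ)-2) = ξ^i * ξ⁻¹ := by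
      rw [show ((i+1:ℕ):ℤ)-2 = (i:ℤ) - 1 by push_cast; ring, zpow_sub₀ hξ0,
        zpow_natCast, zpow_one, div_eq_mul_inv]
    have hZ : Zmat n 2 ⟨3*(i+1)+2, hmem⟩ = 1 := by
      have hm : (3*(i+1)+2) % 3 = 2 := by omega
      simp [Zmat, hm]
    have hav : av n a (3+3*(i+1)) = a ⟨3*(i+1)+2, hmem⟩ := by
      rw [av, dif_pos (by omega)]
      congr 1; exact Fin.ext (by simp; omega)
    rw [hz, hZ, hav]; ring
  have hpow : ξ^((n:ℤ)-2) = ξ^(n-2) := by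
    rw [show (n:ℤ)-2 = ((n-2:ℕ):ℤ) by omega, zpow_natCast]
  rw [h1, show 3*n+3 = 3*(n+1) by ring, sum_range_triple]
  simp only [h2, h3, add_zero, zero_add]
  rw [show (∑ k ∈ Finset.range (n+1), f (3*k+2))
      = ∑ k ∈ Finset.range (n+1), (fun k => f (3*k+2)) k from rfl,
    Finset.sum_range_succ']
  rw [show 3*0+2 = 2 by norm_num, hsum, hf0, om3_split, Om6_range, hpow,
    Finset.sum_sub_distrib, ← Finset.sum_mul]
  field_simp
  ring


lemma om1_pos (a : Fin (3*n+3) → ℝ) (ha : ∀ j, 0 < a j) : 0 < om1 n a := by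
  rw [om1]
  refine Finset.sum_pos (fun k hk => ?_) ⟨0, by simp⟩
  rw [Finset.mem_range] at hk
  exact av_pos a ha _ (by omega)

lemma om3_pos (a : Fin (3*n+3) → ℝ) (ha : ∀ j, 0 < a j) : 0 < om3 n a := by
  rw [om3]
  refine Finset.sum_pos (fun k hk => ?_) ⟨0, by simp⟩
  rw [Finset.mem_range] at hk
  exact av_pos a ha _ (by omega)

/-- For `g ∈ ℝ_{>0}³` with `g₂ = ξ > 0`, the first and third
components of `Θ(g,a)` vanish iff `(g₁,g₃)` solves the linear system
`a₁ξ^{n−1}g₁ − ω1 g₃ = −ξ⁻¹Ω4(ξ)`, `a₃ξ^{n−2}g₁ − ω3 g₃ = −ξ⁻¹Ω6(ξ)`;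
if moreover `Δ(ξ) ≠ 0` (equivalently `ξ ≠ ξ*`), the system has the unique
solution `g₁ = ξ^{1−n}F1(ξ)/Δ(ξ)`, `g₃ = ξ⁻¹F3(ξ)/Δ(ξ)`. -/
theorem linear_system_for_g1_g3 (n : ℕ) (hn : 2 ≤ n)
    (a : Fin (3*n+3) → ℝ) (ha : ∀ j, 0 < a j)
    (ξ : ℝ) (hξ : 0 < ξ)
    (g : Fin 3 → ℝ) (hg : ∀ i, 0 < g i) (hg2 : g 1 = ξ) :
    ((Theta n g a 0 = 0 ∧ Theta n g a 2 = 0) ↔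
      (av n a 1 * ξ ^ (n-1) * g 0 - om1 n a * g 2 = -(ξ⁻¹ * Om4 n a ξ) ∧
       av n a 3 * ξ ^ (n-2) * g 0 - om3 n a * g 2 = -(ξ⁻¹ * Om6 n a ξ))) ∧
    (Dlt n a ξ ≠ 0 ↔ ξ ≠ xistar n a) ∧
    (Dlt n a ξ ≠ 0 →
      ∀ u w : ℝ,
        (av n a 1 * ξ ^ (n-1) * u - om1 n a * w = -(ξ⁻¹ * Om4 n a ξ) ∧
         av n a 3 * ξ ^ (n-2) * u - om3 n a * w = -(ξ⁻¹ * Om6 n a ξ)) ↔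
        (u = g1f n a ξ ∧ w = g3f n a ξ)) := by
  have hξ0 : ξ ≠ 0 := ne_of_gt hξ
  have hg20 : g 2 ≠ 0 := ne_of_gt (hg 2)
  have ha1 : 0 < av n a 1 := av_pos a ha 1 (by omega)
  have ha3 : 0 < av n a 3 := av_pos a ha 3 (by omega)
  have hom1 : 0 < om1 n a := om1_pos a ha
  have hom3 : 0 < om3 n a := om3_pos a ha
  have k0 := theta0_key hn a ξ hξ g (hg 2) hg2
  have k2 := theta2_key hn a ξ hξ g (hg 2) hg2
  have hDval : Dlt n a ξ * (om1 n a * om3 n a)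
      = av n a 1 * ξ * om3 n a - av n a 3 * om1 n a := by
    rw [Dlt]; field_simp
  have hpw : n - 1 = (n-2)+1 := by omega
  refine ⟨?_, ?_, ?_⟩
  · constructor
    · rintro ⟨h0, h2'⟩
      rw [h0, zero_mul] at k0
      rw [h2', zero_mul] at k2
      exact ⟨by linarith, by linarith⟩
    · rintro ⟨e1, e2⟩
      constructor
      · have h : Theta n g a 0 * g 2 = 0 := by rw [k0]; linarith
        exact (mul_eq_zero.mp h).resolve_right hg20
      · have h : Theta n g a 2 * g 2 = 0 := by rw [k2]; linarith
        exact (mul_eq_zero.mp h).resolve_right hg20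
  · have hiff : Dlt n a ξ = 0 ↔ ξ = xistar n a := by
      rw [Dlt, xistar, sub_eq_zero]
      rw [div_mul_eq_mul_div, div_eq_div_iff hom1.ne' hom3.ne',
        eq_div_iff (by positivity)]
      constructor <;> intro h <;> linear_combination h
    exact not_congr hiff
  · intro hD u w
    have hzp : ξ ^ ((1:ℤ) - (n:ℤ)) = (ξ^(n-2) * ξ)⁻¹ := by
      rw [show (1:ℤ)-(n:ℤ) = -(((n-2)+1:ℕ):ℤ) by omega, zpow_neg, zpow_natCast,
        pow_succ]
    constructor
    · rintro ⟨e1, e2⟩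
      rw [hpw, pow_succ] at e1
      have e1' : av n a 1 * ξ^(n-2) * ξ * u * ξ - om1 n a * w * ξ
          = -(Om4 n a ξ) := by
        calc av n a 1 * ξ^(n-2) * ξ * u * ξ - om1 n a * w * ξ
            = (av n a 1 * (ξ^(n-2)*ξ) * u - om1 n a * w) * ξ := by ring
          _ = -(ξ⁻¹ * Om4 n a ξ) * ξ := by rw [e1]
          _ = -(Om4 n a ξ) := by field_simp
      have e2' : av n a 3 * ξ^(n-2) * u * ξ - om3 n a * w * ξ
          = -(Om6 n a ξ) := by
        calc av n a 3 * ξ^(n-2) * u * ξ - om3 n a * w * ξ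
            = (av n a 3 * ξ^(n-2) * u - om3 n a * w) * ξ := by ring
          _ = -(ξ⁻¹ * Om6 n a ξ) * ξ := by rw [e2]
          _ = -(Om6 n a ξ) := by field_simp
      have hu' : u * (Dlt n a ξ * (om1 n a * om3 n a) * (ξ^(n-2)*ξ))
          = om1 n a * Om6 n a ξ - om3 n a * Om4 n a ξ := by
        linear_combination om3 n a * e1' - om1 n a * e2' + (ξ^(n-2)*ξ*u) * hDval
      have hw' : w * ξ * (Dlt n a ξ * (om1 n a * om3 n a))
          = av n a 1 * ξ * Om6 n a ξ - av n a 3 * Om4 n a ξ := by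
        linear_combination av n a 3 * e1' - av n a 1 * ξ * e2' + (w*ξ) * hDval
      constructor
      · rw [g1f, F1, hzp, eq_div_iff hD]
        field_simp
        linear_combination hu'
      · rw [g3f, F3, eq_div_iff hD]
        field_simp
        linear_combination hw'
    · rintro ⟨hu, hw⟩
      subst hu hw
      have hu' : g1f n a ξ * (Dlt n a ξ * (om1 n a * om3 n a) * (ξ^(n-2)*ξ))
          = om1 n a * Om6 n a ξ - om3 n a * Om4 n a ξ := by
        rw [g1f, F1, hzp]
        field_simp
      have hw' : g3f n a ξ * ξ * (Dlt n a ξ * (om1 n a * om3 n a))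
          = av n a 1 * ξ * Om6 n a ξ - av n a 3 * Om4 n a ξ := by
        rw [g3f, F3]
        field_simp
      have hC : Dlt n a ξ * (om1 n a * om3 n a) * ξ ≠ 0 := by
        exact mul_ne_zero (mul_ne_zero hD (by positivity)) hξ0
      have hinv : ξ⁻¹ * ξ = 1 := inv_mul_cancel₀ hξ0
      constructor
      · rw [hpw, pow_succ]
        have h1 : (av n a 1 * (ξ^(n-2)*ξ) * g1f n a ξ - om1 n a * g3f n a ξ
              + ξ⁻¹ * Om4 n a ξ) * (Dlt n a ξ * (om1 n a * om3 n a) * ξ) = 0 := by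
          linear_combination (av n a 1 * ξ) * hu' - om1 n a * hw'
            + Om4 n a ξ * hDval
            + (Om4 n a ξ * (Dlt n a ξ * (om1 n a * om3 n a))) * hinv
        have := (mul_eq_zero.mp h1).resolve_right hC
        linarith
      · have h1 : (av n a 3 * ξ^(n-2) * g1f n a ξ - om3 n a * g3f n a ξ
              + ξ⁻¹ * Om6 n a ξ) * (Dlt n a ξ * (om1 n a * om3 n a) * ξ) = 0 := by
          linear_combination (av n a 3) * hu' - om3 n a * hw'
            + Om6 n a ξ * hDval
            + (Om6 n a ξ * (Dlt n a ξ * (om1 n a * om3 n a))) * hinv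
        have := (mul_eq_zero.mp h1).resolve_right hC
        linarith

end Phos
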